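/- arXiv:2104.13857 — 8 statements merged into one kernel-verified Lean document; each statement's English description precedes it below -/
import Mathlib

section
/- In a slim planar semimodular lattice (a finite planar semimodular lattice with no M3 sublattice), every element has at most two covers. -/
/-- A finite lattice is planar iff its order dimension is at most 2
(Baker–Fishburn–Roberts): the order is the intersection of two linear orders. -/
def IsPlanarLattice (L : Type*) [Lattice L] : Prop :=
  ∃ r₁ r₂ : L → L → Prop, IsLinearOrder L r₁ ∧ IsLinearOrder L r₂ ∧
    ∀ a b : L, a ≤ b ↔ r₁ a b ∧ r₂ a b

/-- Semimodularity: `a ⊓ b ⋖ a` implies `b ⋖ a ⊔ b`. -/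
def IsSemimodular (L : Type*) [Lattice L] : Prop :=
  ∀ a b : L, a ⊓ b ⋖ a → b ⋖ a ⊔ b

/-- A lattice contains a sublattice isomorphic to `M₃` iff it has three distinct
elements with pairwise equal meets and pairwise equal joins. -/
def HasM3Sublattice (L : Type*) [Lattice L] : Prop :=
  ∃ a b c : L, a ≠ b ∧ a ≠ c ∧ b ≠ c ∧
    a ⊓ b = a ⊓ c ∧ a ⊓ c = b ⊓ c ∧ a ⊔ b = a ⊔ c ∧ a ⊔ c = b ⊔ c

/-- A lattice congruence. -/
structure LatticeCon' (L : Type*) [Lattice L] where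
  r : L → L → Prop
  iseqv : Equivalence r
  sup_compat : ∀ {a b c d : L}, r a b → r c d → r (a ⊔ c) (b ⊔ d)
  inf_compat : ∀ {a b c d : L}, r a b → r c d → r (a ⊓ c) (b ⊓ d)

namespace LatticeCon'

variable {L : Type*} [Lattice L]

def toSetoid (α : LatticeCon' L) : Setoid L := ⟨α.r, α.iseqv⟩

/-- The quotient lattice `L/α`. -/
def Quot (α : LatticeCon' L) : Type _ := Quotient α.toSetoid

/-- The quotient map. -/
def mkQ (α : LatticeCon' L) (x : L) : α.Quot := Quotient.mk α.toSetoid x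

instance (α : LatticeCon' L) : Max α.Quot :=
  ⟨Quotient.map₂ (· ⊔ ·) fun _ _ h _ _ h' => α.sup_compat h h'⟩

instance (α : LatticeCon' L) : Min α.Quot :=
  ⟨Quotient.map₂ (· ⊓ ·) fun _ _ h _ _ h' => α.inf_compat h h'⟩

@[simp] theorem mkQ_sup (α : LatticeCon' L) (x y : L) :
    α.mkQ x ⊔ α.mkQ y = α.mkQ (x ⊔ y) := rfl

@[simp] theorem mkQ_inf (α : LatticeCon' L) (x y : L) :
    α.mkQ x ⊓ α.mkQ y = α.mkQ (x ⊓ y) := rfl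

instance (α : LatticeCon' L) : Lattice α.Quot :=
  Lattice.mk'
    (fun a b => Quotient.inductionOn₂ a b fun x y => congrArg _ (sup_comm x y))
    (fun a b c => Quotient.inductionOn₃ a b c fun x y z => congrArg _ (sup_assoc x y z))
    (fun a b => Quotient.inductionOn₂ a b fun x y => congrArg _ (inf_comm x y))
    (fun a b c => Quotient.inductionOn₃ a b c fun x y z => congrArg _ (inf_assoc x y z))
    (fun a b => Quotient.inductionOn₂ a b fun x y => congrArg _ (sup_inf_self (a := x) (b := y)))
    (fun a b => Quotient.inductionOn₂ a b fun x y => congrArg _ (inf_sup_self (a := x) (b := y)))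

theorem ext' {α β : LatticeCon' L} (h : ∀ a b, α.r a b ↔ β.r a b) : α = β := by
  have hr : α.r = β.r := funext fun a => funext fun b => propext (h a b)
  cases α; cases β; cases hr; rfl

instance : PartialOrder (LatticeCon' L) where
  le α β := ∀ ⦃a b : L⦄, α.r a b → β.r a b
  le_refl _ _ _ h := h
  le_trans _ _ _ h h' _ _ hab := h' (h hab)
  le_antisymm _ _ h h' := ext' fun a b => ⟨fun hab => h hab, fun hab => h' hab⟩

instance : OrderTop (LatticeCon' L) where
  top := ⟨fun _ _ => True, ⟨fun _ => trivial, fun _ => trivial, fun _ _ => trivial⟩,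
    fun _ _ => trivial, fun _ _ => trivial⟩
  le_top _ _ _ _ := trivial

instance : OrderBot (LatticeCon' L) where
  bot := ⟨Eq, eq_equivalence, fun h h' => by rw [h, h'], fun h h' => by rw [h, h']⟩
  bot_le _ _ _ h := h ▸ (Equivalence.refl (iseqv _) _)

instance : InfSet (LatticeCon' L) where
  sInf S :=
    ⟨fun a b => ∀ θ ∈ S, θ.r a b,
     ⟨fun _ θ _ => θ.iseqv.refl _,
      fun h θ hθ => θ.iseqv.symm (h θ hθ),
      fun h h' θ hθ => θ.iseqv.trans (h θ hθ) (h' θ hθ)⟩,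
     fun h h' θ hθ => θ.sup_compat (h θ hθ) (h' θ hθ),
     fun h h' θ hθ => θ.inf_compat (h θ hθ) (h' θ hθ)⟩

/-- The principal congruence generated by collapsing the pair `(a, b)`. -/
def conPair (a b : L) : LatticeCon' L := sInf {θ : LatticeCon' L | θ.r a b}

end LatticeCon'

/-- A distributive lattice (as a property). -/
def IsDistribQuot (X : Type*) [Lattice X] : Prop :=
  ∀ x y z : X, x ⊓ (y ⊔ z) = x ⊓ y ⊔ x ⊓ z

/-- A prime ideal of a lattice, as a set. -/
def IsPrimeIdealSet {L : Type*} [Lattice L] (P : Set L) : Prop :=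
  P.Nonempty ∧ P ≠ Set.univ ∧
  (∀ x y : L, x ≤ y → y ∈ P → x ∈ P) ∧
  (∀ x y : L, x ∈ P → y ∈ P → x ⊔ y ∈ P) ∧
  (∀ x y : L, x ⊓ y ∈ P → x ∈ P ∨ y ∈ P)



section Aux
variable {L : Type*} [Lattice L]

lemma cover_meet_eq {x a b : L} (hxa : x ⋖ a) (hxb : x ⋖ b) (hab : a ≠ b) :
    a ⊓ b = x := by
  rcases hxa.eq_or_eq (le_inf hxa.le hxb.le) inf_le_left with h | h
  · exact h
  · exfalso
    have hab' : a ≤ b := h ▸ inf_le_right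
    rcases hxb.eq_or_eq hxa.le hab' with h' | h'
    · exact hxa.lt.ne' h'
    · exact hab h'

lemma cover_not_le {x a b : L} (hxa : x ⋖ a) (hxb : x ⋖ b) (hab : a ≠ b) :
    ¬ a ≤ b := by
  intro hle
  rcases hxb.eq_or_eq hxa.le hle with h' | h'
  · exact hxa.lt.ne' h'
  · exact hab h'

lemma m3_of_covers {x a b c : L} (hxa : x ⋖ a) (hxb : x ⋖ b) (hxc : x ⋖ c)
    (hab : a ≠ b) (hac : a ≠ c) (hbc : b ≠ c)
    (hsemi : IsSemimodular L)
    (hcle : c ≤ a ⊔ b) : HasM3Sublattice L := by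
  have hmab : a ⊓ b = x := cover_meet_eq hxa hxb hab
  have hmba : b ⊓ a = x := cover_meet_eq hxb hxa hab.symm
  have hmac : a ⊓ c = x := cover_meet_eq hxa hxc hac
  have hmbc : b ⊓ c = x := cover_meet_eq hxb hxc hbc
  have hbcov : b ⋖ a ⊔ b := hsemi a b (hmab ▸ hxa)
  have hacov : a ⋖ b ⊔ a := hsemi b a (hmba ▸ hxb)
  have hacov' : a ⋖ a ⊔ b := sup_comm b a ▸ hacov
  have hca : ¬ c ≤ a := cover_not_le hxc hxa hac.symm
  have hcb : ¬ c ≤ b := cover_not_le hxc hxb hbc.symm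
  have hacle : a ⊔ c ≤ a ⊔ b := sup_le le_sup_left hcle
  have haltac : a < a ⊔ c := lt_of_le_of_ne le_sup_left (fun h => hca (h ▸ le_sup_right))
  have hjac : a ⊔ c = a ⊔ b := by
    rcases hacov'.eq_or_eq haltac.le hacle with h | h
    · exact absurd h haltac.ne'
    · exact h
  have hbcle : b ⊔ c ≤ a ⊔ b := sup_le le_sup_right hcle
  have hbltbc : b < b ⊔ c := lt_of_le_of_ne le_sup_left (fun h => hcb (h ▸ le_sup_right))
  have hjbc : b ⊔ c = a ⊔ b := by
    rcases hbcov.eq_or_eq hbltbc.le hbcle with h | h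
    · exact absurd h hbltbc.ne'
    · exact h
  exact ⟨a, b, c, hab, hac, hbc, by rw [hmab, hmac], by rw [hmac, hmbc],
    by rw [hjac], by rw [hjac, hjbc]⟩

lemma mid_le_sup {r₁ r₂ : L → L → Prop}
    (h₁ : IsLinearOrder L r₁) (h₂ : IsLinearOrder L r₂)
    (hiff : ∀ a b : L, a ≤ b ↔ r₁ a b ∧ r₂ a b)
    {a b c : L} (hac' : ¬ a ≤ c)
    (hac : r₁ a c) (hcb1 : r₁ c b) : c ≤ a ⊔ b := by
  have htrans₁ := h₁.toIsPartialOrder.toIsPreorder.toIsTrans.trans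
  have htrans₂ := h₂.toIsPartialOrder.toIsPreorder.toIsTrans.trans
  have hr2ca : r₂ c a := by
    rcases h₂.toTotal.total c a with h | h
    · exact h
    · exact absurd ((hiff a c).2 ⟨hac, h⟩) hac'
  have hub := (hiff a (a ⊔ b)).1 le_sup_left
  have hub' := (hiff b (a ⊔ b)).1 le_sup_right
  exact (hiff c (a ⊔ b)).2 ⟨htrans₁ _ _ _ hcb1 hub'.1, htrans₂ _ _ _ hr2ca hub.2⟩

end Aux

/-- In a slim planar semimodular lattice, every element has at most two covers. -/
theorem sps_at_most_two_covers {L : Type*} [Lattice L] [Fintype L]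
    (hplanar : IsPlanarLattice L) (hsemi : IsSemimodular L)
    (hslim : ¬ HasM3Sublattice L) (x : L) :
    Set.ncard {y : L | x ⋖ y} ≤ 2 := by
  by_contra hlt
  push_neg at hlt
  rw [Set.two_lt_ncard (Set.toFinite _)] at hlt
  obtain ⟨a, ha, b, hb, c, hc, hab, hac, hbc⟩ := hlt
  simp only [Set.mem_setOf_eq] at ha hb hc
  obtain ⟨r₁, r₂, h₁, h₂, hiff⟩ := hplanar
  have htot := h₁.toTotal.total
  -- helper for not-le
  have nle : ∀ {p q : L}, x ⋖ p → x ⋖ q → p ≠ q → ¬ p ≤ q := fun hp hq h => cover_not_le hp hq h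
  apply hslim
  rcases htot a b with hab1 | hba1
  · rcases htot b c with hbc1 | hcb1
    · -- a ≤₁ b ≤₁ c : b is middle
      exact m3_of_covers ha hc hb hac hab hbc.symm hsemi
        (mid_le_sup h₁ h₂ hiff (nle ha hb hab) hab1 hbc1)
    · rcases htot a c with hac1 | hca1
      · -- a ≤₁ c ≤₁ b : c is middle
        exact m3_of_covers ha hb hc hab hac hbc hsemi
          (mid_le_sup h₁ h₂ hiff (nle ha hc hac) hac1 hcb1)
      · -- c ≤₁ a ≤₁ b : a is middle
        exact m3_of_covers hc hb ha hbc.symm hac.symm hab.symm hsemi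
          (mid_le_sup h₁ h₂ hiff (nle hc ha hac.symm) hca1 hab1)
  · rcases htot a c with hac1 | hca1
    · -- b ≤₁ a ≤₁ c : a is middle
      exact m3_of_covers hb hc ha hbc hab.symm hac.symm hsemi
        (mid_le_sup h₁ h₂ hiff (nle hb ha hab.symm) hba1 hac1)
    · rcases htot b c with hbc1 | hcb1
      · -- b ≤₁ c ≤₁ a : c is middle
        exact m3_of_covers hb ha hc hab.symm hbc hac hsemi
          (mid_le_sup h₁ h₂ hiff (nle hb hc hbc) hbc1 hca1)
      · -- c ≤₁ b ≤₁ a : b is middle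
        exact m3_of_covers hc ha hb hac.symm hbc.symm hab hsemi
          (mid_le_sup h₁ h₂ hiff (nle hc hb hbc.symm) hcb1 hba1)
end

section
/- Every slim planar semimodular lattice satisfies the meet-semidistributive law: for all x, y, z, if x ∧ y = x ∧ z then x ∧ y = x ∧ (y ∨ z). -/
/-- A lattice congruence. -/
structure LatticeCongruence (L : Type*) [Lattice L] where
  r : L → L → Prop
  iseqv : Equivalence r
  sup_compat : ∀ {a b c d : L}, r a b → r c d → r (a ⊔ c) (b ⊔ d)
  inf_compat : ∀ {a b c d : L}, r a b → r c d → r (a ⊓ c) (b ⊓ d)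

namespace LatticeCongruence

variable {L : Type*} [Lattice L]

def toSetoid (α : LatticeCongruence L) : Setoid L := ⟨α.r, α.iseqv⟩

/-- The quotient lattice `L/α`. -/
def Quot (α : LatticeCongruence L) : Type _ := Quotient α.toSetoid

/-- The quotient map. -/
def mkQ (α : LatticeCongruence L) (x : L) : α.Quot := Quotient.mk α.toSetoid x

instance (α : LatticeCongruence L) : Max α.Quot :=
  ⟨Quotient.map₂ (· ⊔ ·) fun _ _ h _ _ h' => α.sup_compat h h'⟩

instance (α : LatticeCongruence L) : Min α.Quot :=
  ⟨Quotient.map₂ (· ⊓ ·) fun _ _ h _ _ h' => α.inf_compat h h'⟩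

@[simp] theorem mkQ_sup (α : LatticeCongruence L) (x y : L) :
    α.mkQ x ⊔ α.mkQ y = α.mkQ (x ⊔ y) := rfl

@[simp] theorem mkQ_inf (α : LatticeCongruence L) (x y : L) :
    α.mkQ x ⊓ α.mkQ y = α.mkQ (x ⊓ y) := rfl

instance (α : LatticeCongruence L) : Lattice α.Quot :=
  Lattice.mk'
    (fun a b => Quotient.inductionOn₂ a b fun x y => congrArg _ (sup_comm x y))
    (fun a b c => Quotient.inductionOn₃ a b c fun x y z => congrArg _ (sup_assoc x y z))
    (fun a b => Quotient.inductionOn₂ a b fun x y => congrArg _ (inf_comm x y))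
    (fun a b c => Quotient.inductionOn₃ a b c fun x y z => congrArg _ (inf_assoc x y z))
    (fun a b => Quotient.inductionOn₂ a b fun x y => congrArg _ (sup_inf_self (a := x) (b := y)))
    (fun a b => Quotient.inductionOn₂ a b fun x y => congrArg _ (inf_sup_self (a := x) (b := y)))

theorem ext' {α β : LatticeCongruence L} (h : ∀ a b, α.r a b ↔ β.r a b) : α = β := by
  have hr : α.r = β.r := funext fun a => funext fun b => propext (h a b)
  cases α; cases β; cases hr; rfl

instance : PartialOrder (LatticeCongruence L) where
  le α β := ∀ ⦃a b : L⦄, α.r a b → β.r a b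
  le_refl _ _ _ h := h
  le_trans _ _ _ h h' _ _ hab := h' (h hab)
  le_antisymm _ _ h h' := ext' fun a b => ⟨fun hab => h hab, fun hab => h' hab⟩

instance : OrderTop (LatticeCongruence L) where
  top := ⟨fun _ _ => True, ⟨fun _ => trivial, fun _ => trivial, fun _ _ => trivial⟩,
    fun _ _ => trivial, fun _ _ => trivial⟩
  le_top _ _ _ _ := trivial

instance : OrderBot (LatticeCongruence L) where
  bot := ⟨Eq, eq_equivalence, fun h h' => by rw [h, h'], fun h h' => by rw [h, h']⟩
  bot_le _ _ _ h := h ▸ (Equivalence.refl (iseqv _) _)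

instance : InfSet (LatticeCongruence L) where
  sInf S :=
    ⟨fun a b => ∀ θ ∈ S, θ.r a b,
     ⟨fun _ θ _ => θ.iseqv.refl _,
      fun h θ hθ => θ.iseqv.symm (h θ hθ),
      fun h h' θ hθ => θ.iseqv.trans (h θ hθ) (h' θ hθ)⟩,
     fun h h' θ hθ => θ.sup_compat (h θ hθ) (h' θ hθ),
     fun h h' θ hθ => θ.inf_compat (h θ hθ) (h' θ hθ)⟩

/-- The principal congruence generated by collapsing the pair `(a, b)`. -/
def conPair (a b : L) : LatticeCongruence L := sInf {θ : LatticeCongruence L | θ.r a b}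

end LatticeCongruence

set_option linter.unusedSectionVars false
set_option linter.unusedVariables false

namespace SPSAux

variable {L : Type*} [Lattice L] [Fintype L]

private lemma covEqLow {a b c : L} (h : a ⋖ b) (h1 : a ≤ c) (h2 : c ≤ b) (h3 : c ≠ b) : c = a :=
  (h.eq_or_eq h1 h2).resolve_right h3

private lemma covEqHigh {a b c : L} (h : a ⋖ b) (h1 : a ≤ c) (h2 : c ≤ b) (h3 : c ≠ a) : c = b :=
  (h.eq_or_eq h1 h2).resolve_left h3

private lemma coverMeet {m p y : L} (h : m ⋖ p) (hm : m ≤ y) (hp : ¬ p ≤ y) : p ⊓ y = m :=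
  covEqLow h (le_inf h.lt.le hm) inf_le_left (fun he => hp (inf_eq_left.mp he))

private lemma step (hsemi : IsSemimodular L) {m p Y Z Z' : L}
    (hmp : m ⋖ p) (hpZ : ¬ p ≤ Z)
    (hpYZ : p ≤ Y ⊔ Z) (hZ'm : m ≤ Z') (hZ'Z : Z' ⋖ Z) (hpw : ¬ p ≤ Y ⊔ Z') :
    HasM3Sublattice L ∨
      ((Y ⊔ Z') ⊓ (Z ⊔ p) = Z' ∧ (Y ⊔ Z') ⊓ Z = Z' ∧ (Y ⊔ Z') ⊔ p = Y ⊔ Z) := by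
  set w := Y ⊔ Z' with hw
  have hZ'w : Z' ≤ w := le_sup_right
  have hpZ' : ¬ p ≤ Z' := fun h => hpZ (h.trans hZ'Z.le)
  have hZw : ¬ Z ≤ w := fun h => hpw (hpYZ.trans (sup_le le_sup_left h))
  have hwZ : w ⊓ Z = Z' :=
    covEqLow hZ'Z (le_inf hZ'w hZ'Z.le) inf_le_right (fun h => hZw (inf_eq_right.mp h))
  have hZsupw : Z ⊔ w = Y ⊔ Z := by
    refine le_antisymm (sup_le le_sup_right (sup_le le_sup_left (hZ'Z.le.trans le_sup_right))) ?_
    exact sup_le (le_sup_left.trans le_sup_right) le_sup_left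
  have ht : w ⋖ Y ⊔ Z := by
    have h := hsemi Z w (by rw [inf_comm, hwZ]; exact hZ'Z)
    rwa [hZsupw] at h
  have hwYZ : w ≤ Y ⊔ Z := sup_le le_sup_left (hZ'Z.le.trans le_sup_right)
  have hpZm : p ⊓ Z = m := coverMeet hmp (hZ'm.trans hZ'Z.le) hpZ
  have hpZ'm : p ⊓ Z' = m := coverMeet hmp hZ'm hpZ'
  have cZ' : Z' ⋖ Z' ⊔ p := by
    have h := hsemi p Z' (by rwa [hpZ'm])
    rwa [sup_comm] at h
  have cZ : Z ⋖ Z ⊔ p := by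
    have h := hsemi p Z (by rwa [hpZm])
    rwa [sup_comm] at h
  have hwp : w ⊔ p = Y ⊔ Z :=
    covEqHigh ht le_sup_left (sup_le hwYZ hpYZ) (fun h => hpw (sup_eq_left.mp h))
  have hZp' : Z ⊓ (Z' ⊔ p) = Z' := by
    refine covEqLow hZ'Z (le_inf hZ'Z.le le_sup_left) inf_le_left (fun h => ?_)
    have hle : Z ≤ Z' ⊔ p := inf_eq_left.mp h
    have hne : Z ≠ Z' ⊔ p := fun he => hpZ (he ▸ le_sup_right)
    exact cZ'.2 hZ'Z.lt (lt_of_le_of_ne hle hne)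
  have cZ'p : Z' ⊔ p ⋖ Z ⊔ p := by
    have h := hsemi Z (Z' ⊔ p) (by rwa [hZp'])
    rwa [← sup_assoc, sup_eq_left.mpr hZ'Z.le] at h
  have hwZ'p : w ⊓ (Z' ⊔ p) = Z' :=
    covEqLow cZ' (le_inf hZ'w le_sup_left) inf_le_right
      (fun h => hpw (le_sup_right.trans (inf_eq_right.mp h)))
  by_cases hd : w ⊓ (Z ⊔ p) = Z'
  · exact Or.inr ⟨hd, hwZ, hwp⟩
  · left
    set d := w ⊓ (Z ⊔ p) with hdd
    have hZ'd : Z' ≤ d := le_inf hZ'w (hZ'Z.le.trans le_sup_left)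
    have m2 : Z ⊓ d = Z' := by
      refine le_antisymm ?_ (le_inf hZ'Z.le hZ'd)
      calc Z ⊓ d ≤ Z ⊓ w := inf_le_inf_left Z inf_le_left
        _ = Z' := by rw [inf_comm]; exact hwZ
    have m3 : (Z' ⊔ p) ⊓ d = Z' := by
      refine le_antisymm ?_ (le_inf le_sup_left hZ'd)
      calc (Z' ⊔ p) ⊓ d ≤ (Z' ⊔ p) ⊓ w := inf_le_inf_left _ inf_le_left
        _ = Z' := by rw [inf_comm]; exact hwZ'p
    have m1 : Z ⊓ (Z' ⊔ p) = Z' := hZp'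
    have j1 : Z ⊔ (Z' ⊔ p) = Z ⊔ p := by rw [← sup_assoc, sup_eq_left.mpr hZ'Z.le]
    have j2 : Z ⊔ d = Z ⊔ p := by
      refine covEqHigh cZ le_sup_left (sup_le le_sup_left inf_le_right) (fun h => hd ?_)
      have hdZ : d ≤ Z := sup_eq_left.mp h
      exact le_antisymm (hwZ ▸ le_inf inf_le_left hdZ) hZ'd
    have j3 : (Z' ⊔ p) ⊔ d = Z ⊔ p := by
      refine covEqHigh cZ'p le_sup_left
        (sup_le (sup_le (hZ'Z.le.trans le_sup_left) le_sup_right) inf_le_right) (fun h => hd ?_)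
      have hdZ : d ≤ Z' ⊔ p := sup_eq_left.mp h
      exact le_antisymm (hwZ'p ▸ le_inf inf_le_left hdZ) hZ'd
    have d1 : Z ≠ Z' ⊔ p := fun h => hpZ (h ▸ le_sup_right)
    have d2 : Z ≠ d := fun h => hZw (h ▸ inf_le_left)
    have d3 : Z' ⊔ p ≠ d := fun h => hpw ((le_sup_right.trans h.le).trans inf_le_left)
    exact ⟨Z, Z' ⊔ p, d, d1, d2, d3, m1.trans m2.symm, m2.trans m3.symm,
      j1.trans j2.symm, j2.trans j3.symm⟩

/-- The termination measure. -/
private noncomputable def mu (m y z : L) : ℕ :=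
  (Set.Icc m (y ⊔ z)).ncard * (Fintype.card L + 1) ^ 2
    + (Set.Iic z).ncard * (Fintype.card L + 1) + (Set.Iic y).ncard

private lemma ncard_lt_S (s : Set L) : s.ncard < Fintype.card L + 1 := by
  have h : s.ncard ≤ (Set.univ : Set L).ncard :=
    Set.ncard_le_ncard (Set.subset_univ s) Set.finite_univ
  rw [Set.ncard_univ, Nat.card_eq_fintype_card] at h
  omega

private lemma iic_lt {a b : L} (h : a < b) : (Set.Iic a).ncard < (Set.Iic b).ncard := by
  refine Set.ncard_lt_ncard ?_ (Set.toFinite _)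
  rw [Set.ssubset_def]
  refine ⟨Set.Iic_subset_Iic.mpr h.le, fun hs => h.not_ge (hs (Set.mem_Iic.mpr le_rfl))⟩

private lemma icc_lt_top {m t t' : L} (h : t' < t) (hmt : m ≤ t) :
    (Set.Icc m t').ncard < (Set.Icc m t).ncard := by
  refine Set.ncard_lt_ncard ?_ (Set.toFinite _)
  rw [Set.ssubset_def]
  exact ⟨Set.Icc_subset_Icc le_rfl h.le, fun hs => h.not_ge (hs ⟨hmt, le_rfl⟩).2⟩

private lemma icc_lt_bot {m m' t : L} (h : m < m') (hmt : m ≤ t) :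
    (Set.Icc m' t).ncard < (Set.Icc m t).ncard := by
  refine Set.ncard_lt_ncard ?_ (Set.toFinite _)
  rw [Set.ssubset_def]
  exact ⟨Set.Icc_subset_Icc h.le le_rfl, fun hs => h.not_ge (hs ⟨le_rfl, hmt⟩).1⟩

private lemma measure_lt {S A A' b b' c c' : ℕ} (hA : A' < A) (hb : b < S) (hc : c < S) :
    A' * S ^ 2 + b * S + c < A * S ^ 2 + b' * S + c' := by
  have h2 : b * S + c < (b + 1) * S := by
    rw [add_mul, one_mul]; omega
  have h3 : (b + 1) * S ≤ S * S := Nat.mul_le_mul_right _ hb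
  have h4 : A' * S ^ 2 + S * S ≤ A * S ^ 2 := by
    have h5 : (A' + 1) * S ^ 2 ≤ A * S ^ 2 := Nat.mul_le_mul_right _ hA
    calc A' * S ^ 2 + S * S = (A' + 1) * S ^ 2 := by ring
      _ ≤ A * S ^ 2 := h5
  have h6 : A * S ^ 2 ≤ A * S ^ 2 + b' * S + c' := by omega
  omega

private lemma no_bad (hsemi : IsSemimodular L) (hslim : ¬ HasM3Sublattice L) :
    ∀ (n : ℕ) (m p y z : L), mu m y z ≤ n →
      m ⋖ p → m ≤ y → m ≤ z → ¬ p ≤ y → ¬ p ≤ z → p ≤ y ⊔ z → False := by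
  intro n
  induction n using Nat.strong_induction_on with
  | _ n IH =>
  intro m p y z hn hmp hmy hmz hpy hpz hpyz
  have hmy' : m < y := lt_of_le_of_ne hmy (fun h => hpz (by
    rw [← h, sup_comm, sup_eq_left.mpr hmz] at hpyz; exact hpyz))
  have hmz' : m < z := lt_of_le_of_ne hmz (fun h => hpy (by
    rw [← h, sup_eq_left.mpr hmy] at hpyz; exact hpyz))
  obtain ⟨z', hmz'le, hz'z⟩ := exists_le_covBy_of_lt hmz'
  have hpz'' : ¬ p ≤ z' := fun h => hpz (h.trans hz'z.le)
  by_cases hpw : p ≤ y ⊔ z'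
  · -- recurse with z'
    by_cases heq : y ⊔ z' = y ⊔ z
    · have hlt : mu m y z' < mu m y z := by
        unfold mu
        rw [heq]
        exact Nat.add_lt_add_right (Nat.add_lt_add_left
          (mul_lt_mul_of_pos_right (iic_lt hz'z.lt) (Nat.succ_pos _)) _) _
      exact IH _ (lt_of_lt_of_le hlt hn) m p y z' le_rfl hmp hmy hmz'le hpy hpz'' hpw
    · have hlt : mu m y z' < mu m y z := by
        unfold mu
        exact measure_lt (icc_lt_top (lt_of_le_of_ne (sup_le_sup_left hz'z.le y) heq)
          (hmy.trans le_sup_left)) (ncard_lt_S _) (ncard_lt_S _)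
      exact IH _ (lt_of_lt_of_le hlt hn) m p y z' le_rfl hmp hmy hmz'le hpy hpz'' hpw
  · by_cases hz'm : z' = m
    · -- the case m ⋖ z
      rcases step hsemi hmp hpz hpyz hmz'le hz'z hpw with hM3 | ⟨hd, hwZ, hwp⟩
      · exact hslim hM3
      rw [hz'm, sup_eq_left.mpr hmy] at hd hwZ hwp
      -- now hwZ : y ⊓ z = z' = m,  hwp : y ⊔ p = y ⊔ z
      obtain ⟨y'', hmy''le, hy''y⟩ := exists_le_covBy_of_lt hmy'
      have hpy'' : ¬ p ≤ y'' := fun h => hpy (h.trans hy''y.le)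
      have hpzy : p ≤ z ⊔ y := by rwa [sup_comm] at hpyz
      by_cases hpw2 : p ≤ z ⊔ y''
      · by_cases heq2 : y'' ⊔ z = y ⊔ z
        · have hlt : mu m y'' z < mu m y z := by
            unfold mu
            rw [heq2]
            exact Nat.add_lt_add_left (iic_lt hy''y.lt) _
          exact IH _ (lt_of_lt_of_le hlt hn) m p y'' z le_rfl hmp hmy''le hmz hpy'' hpz
            (by rwa [sup_comm] at hpw2)
        · have hlt : mu m y'' z < mu m y z := by
            unfold mu
            exact measure_lt (icc_lt_top (lt_of_le_of_ne (sup_le_sup_right hy''y.le z) heq2)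
              (hmy.trans le_sup_left)) (ncard_lt_S _) (ncard_lt_S _)
          exact IH _ (lt_of_lt_of_le hlt hn) m p y'' z le_rfl hmp hmy''le hmz hpy'' hpz
            (by rwa [sup_comm] at hpw2)
      · by_cases hy''m : y'' = m
        · -- deepest case : build the M₃  (p, y, z)
          rcases step hsemi hmp hpy hpzy hmy''le hy''y hpw2 with hM3 | ⟨hd2, hw2Y, hw2p⟩
          · exact hslim hM3
          rw [hy''m, sup_eq_left.mpr hmz] at hd2 hw2Y hw2p
          -- hw2p : z ⊔ p = z ⊔ y
          refine hslim ⟨p, y, z, ?_, ?_, ?_, ?_, ?_, ?_, ?_⟩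
          · exact fun h => hpy h.le
          · exact fun h => hpz h.le
          · exact fun h => hpz (by rwa [h, sup_idem] at hpyz)
          · rw [coverMeet hmp hmy hpy, coverMeet hmp hmz hpz]
          · rw [coverMeet hmp hmz hpz, hwZ]
          · rw [sup_comm p y, sup_comm p z, hwp, hw2p, sup_comm z y]
          · rw [sup_comm p z, hw2p, sup_comm z y]
        · -- recurse with (y'', y'' ⊔ p, z ⊔ y'', y)
          have hpy''m : p ⊓ y'' = m := coverMeet hmp hmy''le hpy''
          have cy'' : y'' ⋖ y'' ⊔ p := by
            have h := hsemi p y'' (by rwa [hpy''m])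
            rwa [sup_comm] at h
          have hsupEq : (z ⊔ y'') ⊔ y = z ⊔ y := by
            rw [sup_assoc, sup_eq_right.mpr hy''y.le]
          have hlt : mu y'' (z ⊔ y'') y < mu m y z := by
            unfold mu
            refine measure_lt ?_ (ncard_lt_S _) (ncard_lt_S _)
            rw [hsupEq, sup_comm z y]
            exact icc_lt_bot (lt_of_le_of_ne hmy''le (fun h => hy''m h.symm))
              (hmy.trans le_sup_left)
          refine IH _ (lt_of_lt_of_le hlt hn) y'' (y'' ⊔ p) (z ⊔ y'') y le_rfl cy''
            le_sup_right hy''y.le ?_ ?_ ?_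
          · exact fun h => hpw2 (le_sup_right.trans h)
          · exact fun h => hpy (le_sup_right.trans h)
          · rw [hsupEq]
            exact sup_le (hy''y.le.trans le_sup_right) hpzy
    · -- recurse with (z', z' ⊔ p, y ⊔ z', z)
      have hpz'm : p ⊓ z' = m := coverMeet hmp hmz'le hpz''
      have cz' : z' ⋖ z' ⊔ p := by
        have h := hsemi p z' (by rwa [hpz'm])
        rwa [sup_comm] at h
      have hsupEq : (y ⊔ z') ⊔ z = y ⊔ z := by
        rw [sup_assoc, sup_eq_right.mpr hz'z.le]
      have hlt : mu z' (y ⊔ z') z < mu m y z := by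
        unfold mu
        refine measure_lt ?_ (ncard_lt_S _) (ncard_lt_S _)
        rw [hsupEq]
        exact icc_lt_bot (lt_of_le_of_ne hmz'le (fun h => hz'm h.symm))
          (hmy.trans le_sup_left)
      refine IH _ (lt_of_lt_of_le hlt hn) z' (z' ⊔ p) (y ⊔ z') z le_rfl cz'
        le_sup_right hz'z.le ?_ ?_ ?_
      · exact fun h => hpw (le_sup_right.trans h)
      · exact fun h => hpz (le_sup_right.trans h)
      · rw [hsupEq]
        exact sup_le (hz'z.le.trans le_sup_right) hpyz

end SPSAux

/-- Every slim planar semimodular lattice is meet-semidistributive. -/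
theorem sps_meet_semidistributive {L : Type*} [Lattice L] [Fintype L]
    (hplanar : IsPlanarLattice L) (hsemi : IsSemimodular L)
    (hslim : ¬ HasM3Sublattice L) :
    ∀ x y z : L, x ⊓ y = x ⊓ z → x ⊓ y = x ⊓ (y ⊔ z) := by
  
  intro x y z h
  set m := x ⊓ y with hm
  have hle : m ≤ x ⊓ (y ⊔ z) := le_inf inf_le_left (inf_le_right.trans le_sup_left)
  rcases eq_or_lt_of_le hle with heq | hlt
  · exact heq
  exfalso
  obtain ⟨p, hmp, hpb⟩ := exists_covBy_le_of_lt hlt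
  have hpx : p ≤ x := hpb.trans inf_le_left
  have hpyz : p ≤ y ⊔ z := hpb.trans inf_le_right
  have hmy : m ≤ y := inf_le_right
  have hmz : m ≤ z := h.le.trans inf_le_right
  have hpy : ¬ p ≤ y := fun hp => hmp.lt.not_ge (le_inf hpx hp)
  have hpz : ¬ p ≤ z := fun hp => hmp.lt.not_ge (h ▸ le_inf hpx hp)
  exact SPSAux.no_bad hsemi hslim (SPSAux.mu m y z) m p y z le_rfl hmp hmy hmz hpy hpz hpyz
end

section
/- Let L be a finite lattice, α a congruence of L, and let A = [0_A, 1_A] and B = [0_B, 1_B] be congruence classes of α with A ≺ B in the quotient lattice L/α. Then for every x ∈ A there is a smallest element x^B of B with x ≤ x^B, namely x ∨ 0_B, and for every y ∈ B there is a greatest element y_A of A with y_A ≤ y, namely y ∧ 1_A. Moreover, (x^B)_A ≺ x^B in L for every x ∈ A. -/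
/-- A lattice congruence. -/
structure LatticeCong (L : Type*) [Lattice L] where
  r : L → L → Prop
  iseqv : Equivalence r
  sup_compat : ∀ {a b c d : L}, r a b → r c d → r (a ⊔ c) (b ⊔ d)
  inf_compat : ∀ {a b c d : L}, r a b → r c d → r (a ⊓ c) (b ⊓ d)

namespace LatticeCong

variable {L : Type*} [Lattice L]

def toSetoid (α : LatticeCong L) : Setoid L := ⟨α.r, α.iseqv⟩

/-- The quotient lattice `L/α`. -/
def Quot (α : LatticeCong L) : Type _ := Quotient α.toSetoid

/-- The quotient map. -/
def mkQ (α : LatticeCong L) (x : L) : α.Quot := Quotient.mk α.toSetoid x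

instance (α : LatticeCong L) : Max α.Quot :=
  ⟨Quotient.map₂ (· ⊔ ·) fun _ _ h _ _ h' => α.sup_compat h h'⟩

instance (α : LatticeCong L) : Min α.Quot :=
  ⟨Quotient.map₂ (· ⊓ ·) fun _ _ h _ _ h' => α.inf_compat h h'⟩

@[simp] theorem mkQ_sup (α : LatticeCong L) (x y : L) :
    α.mkQ x ⊔ α.mkQ y = α.mkQ (x ⊔ y) := rfl

@[simp] theorem mkQ_inf (α : LatticeCong L) (x y : L) :
    α.mkQ x ⊓ α.mkQ y = α.mkQ (x ⊓ y) := rfl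

instance (α : LatticeCong L) : Lattice α.Quot :=
  Lattice.mk'
    (fun a b => Quotient.inductionOn₂ a b fun x y => congrArg _ (sup_comm x y))
    (fun a b c => Quotient.inductionOn₃ a b c fun x y z => congrArg _ (sup_assoc x y z))
    (fun a b => Quotient.inductionOn₂ a b fun x y => congrArg _ (inf_comm x y))
    (fun a b c => Quotient.inductionOn₃ a b c fun x y z => congrArg _ (inf_assoc x y z))
    (fun a b => Quotient.inductionOn₂ a b fun x y => congrArg _ (sup_inf_self (a := x) (b := y)))
    (fun a b => Quotient.inductionOn₂ a b fun x y => congrArg _ (inf_sup_self (a := x) (b := y)))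

theorem ext' {α β : LatticeCong L} (h : ∀ a b, α.r a b ↔ β.r a b) : α = β := by
  have hr : α.r = β.r := funext fun a => funext fun b => propext (h a b)
  cases α; cases β; cases hr; rfl

instance : PartialOrder (LatticeCong L) where
  le α β := ∀ ⦃a b : L⦄, α.r a b → β.r a b
  le_refl _ _ _ h := h
  le_trans _ _ _ h h' _ _ hab := h' (h hab)
  le_antisymm _ _ h h' := ext' fun a b => ⟨fun hab => h hab, fun hab => h' hab⟩

instance : OrderTop (LatticeCong L) where
  top := ⟨fun _ _ => True, ⟨fun _ => trivial, fun _ => trivial, fun _ _ => trivial⟩,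
    fun _ _ => trivial, fun _ _ => trivial⟩
  le_top _ _ _ _ := trivial

instance : OrderBot (LatticeCong L) where
  bot := ⟨Eq, eq_equivalence, fun h h' => by rw [h, h'], fun h h' => by rw [h, h']⟩
  bot_le _ _ _ h := h ▸ (Equivalence.refl (iseqv _) _)

instance : InfSet (LatticeCong L) where
  sInf S :=
    ⟨fun a b => ∀ θ ∈ S, θ.r a b,
     ⟨fun _ θ _ => θ.iseqv.refl _,
      fun h θ hθ => θ.iseqv.symm (h θ hθ),
      fun h h' θ hθ => θ.iseqv.trans (h θ hθ) (h' θ hθ)⟩,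
     fun h h' θ hθ => θ.sup_compat (h θ hθ) (h' θ hθ),
     fun h h' θ hθ => θ.inf_compat (h θ hθ) (h' θ hθ)⟩

/-- The principal congruence generated by collapsing the pair `(a, b)`. -/
def conPair (a b : L) : LatticeCong L := sInf {θ : LatticeCong L | θ.r a b}

end LatticeCong

/-- Interface of adjacent congruence classes `A = [oA, tA] ≺ B = [oB, tB]` in `L/α`. -/
theorem congruence_class_interface {L : Type*} [Lattice L] [Fintype L]
    (α : LatticeCong L) (oA tA oB tB : L)
    (hA : Set.Icc oA tA = {x : L | α.r x oA})
    (hB : Set.Icc oB tB = {x : L | α.r x oB})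
    (hcov : α.mkQ oA ⋖ α.mkQ oB) :
    (∀ x ∈ Set.Icc oA tA, IsLeast {b : L | b ∈ Set.Icc oB tB ∧ x ≤ b} (x ⊔ oB)) ∧
    (∀ y ∈ Set.Icc oB tB, IsGreatest {a : L | a ∈ Set.Icc oA tA ∧ a ≤ y} (y ⊓ tA)) ∧
    (∀ x ∈ Set.Icc oA tA, ((x ⊔ oB) ⊓ tA) ⋖ (x ⊔ oB)) := by
  have hA' : ∀ x : L, x ∈ Set.Icc oA tA ↔ α.r x oA := fun x => by
    rw [Set.ext_iff] at hA; exact hA x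
  have hB' : ∀ x : L, x ∈ Set.Icc oB tB ↔ α.r x oB := fun x => by
    rw [Set.ext_iff] at hB; exact hB x
  have hle : α.mkQ oA ≤ α.mkQ oB := hcov.1.le
  have hsup : α.r (oA ⊔ oB) oB := Quotient.exact (sup_eq_right.mpr hle)
  have hinf : α.r (oA ⊓ oB) oA := Quotient.exact (inf_eq_left.mpr hle)
  have hoAtA : oA ≤ tA := ((hA' oA).mpr (α.iseqv.refl oA)).2
  have htA : α.r tA oA := (hA' tA).mp ⟨hoAtA, le_refl tA⟩
  have hmono : ∀ u v : L, u ≤ v → α.mkQ u ≤ α.mkQ v := fun u v h => by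
    have h2 : α.mkQ u ⊔ α.mkQ v = α.mkQ v := by
      rw [LatticeCong.mkQ_sup, sup_eq_right.mpr h]
    exact sup_eq_right.mp h2
  -- part 1
  have part1 : ∀ x ∈ Set.Icc oA tA,
      IsLeast {b : L | b ∈ Set.Icc oB tB ∧ x ≤ b} (x ⊔ oB) := by
    intro x hx
    have hxr : α.r x oA := (hA' x).mp hx
    have hmem : α.r (x ⊔ oB) oB :=
      α.iseqv.trans (α.sup_compat hxr (α.iseqv.refl oB)) hsup
    refine ⟨⟨(hB' _).mpr hmem, le_sup_left⟩, ?_⟩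
    rintro b ⟨hbB, hxb⟩
    exact sup_le hxb ((hB' b).mp hbB |> fun h => ((hB' b).mpr h) |>.1 : oB ≤ b)
  -- part 2
  have part2 : ∀ y ∈ Set.Icc oB tB,
      IsGreatest {a : L | a ∈ Set.Icc oA tA ∧ a ≤ y} (y ⊓ tA) := by
    intro y hy
    have hyr : α.r y oB := (hB' y).mp hy
    have h1 : α.r (y ⊓ tA) (oB ⊓ oA) :=
      α.inf_compat hyr htA
    have h2 : α.r (oB ⊓ oA) oA := by
      rw [inf_comm]; exact hinf
    refine ⟨⟨(hA' _).mpr (α.iseqv.trans h1 h2), inf_le_left⟩, ?_⟩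
    rintro a ⟨haA, hay⟩
    exact le_inf hay haA.2
  refine ⟨part1, part2, ?_⟩
  intro x hx
  set b := x ⊔ oB with hb
  have hbB : b ∈ Set.Icc oB tB := (part1 x hx).1.1
  set a := b ⊓ tA with ha
  have haA : a ∈ Set.Icc oA tA := (part2 b hbB).1.1
  have hne : a ≠ b := by
    intro h
    apply hcov.1.ne
    have h1 : α.r a oA := (hA' a).mp haA
    have h2 : α.r a oB := h ▸ (hB' b).mp hbB
    exact (Quotient.sound (α.iseqv.trans (α.iseqv.symm h1) h2) : α.mkQ oA = α.mkQ oB)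
  have hxa : x ≤ a := le_inf le_sup_left hx.2
  refine ⟨lt_of_le_of_ne inf_le_left hne, ?_⟩
  intro z hz1 hz2
  have haq : α.mkQ a = α.mkQ oA := Quotient.sound ((hA' a).mp haA)
  have hbq : α.mkQ b = α.mkQ oB := Quotient.sound ((hB' b).mp hbB)
  have hz1' : α.mkQ oA ≤ α.mkQ z := haq ▸ hmono a z hz1.le
  have hz2' : α.mkQ z ≤ α.mkQ oB := hbq ▸ hmono z b hz2.le
  rcases hz1'.lt_or_eq with hlt | heq
  · -- mkQ z must equal mkQ oB
    have : α.mkQ z = α.mkQ oB := hz2'.eq_of_not_lt (hcov.2 hlt)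
    have hzB : α.r z oB := Quotient.exact this
    have hoBz : oB ≤ z := ((hB' z).mpr hzB).1
    have : b ≤ z := sup_le (hxa.trans hz1.le) hoBz
    exact hz2.not_ge this
  · have hzA : α.r z oA := Quotient.exact heq.symm
    have hztA : z ≤ tA := ((hA' z).mpr hzA).2
    have : z ≤ a := le_inf hz2.le hztA
    exact hz1.not_ge this
end

section
/- Let L be a finite semimodular lattice, α a congruence of L, and A = [0_A, 1_A], B = [0_B, 1_B] congruence classes with A ≺ B in L/α and with 1_A and 0_B incomparable. Set a_0 = 1_A ∧ 0_B, and let a_0 = a_0 ≺ a_1 ≺ ... ≺ a_t = 1_A be a maximal chain in [a_0, 1_A]. Then setting b_i = a_i ∨ 0_B, we have a_i ≺ b_i for all i, b_0 ≺ b_1 ≺ ... ≺ b_t, b_t = 1_A ∨ 0_B, and the maps x ↦ x ∨ 0_B and y ↦ y ∧ 1_A are mutually inverse isomorphisms between the chains {a_0,...,a_t} and {b_0,...,b_t}. -/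
/-- The ladder between adjacent congruence classes in a finite semimodular lattice. -/
theorem ladder_between_classes {L : Type*} [Lattice L] [Fintype L]
    (hsemi : IsSemimodular L)
    (α : LatticeCon' L) (oA tA oB tB : L)
    (hA : Set.Icc oA tA = {x : L | α.r x oA})
    (hB : Set.Icc oB tB = {x : L | α.r x oB})
    (hcov : α.mkQ oA ⋖ α.mkQ oB)
    (hincomp : ¬ tA ≤ oB ∧ ¬ oB ≤ tA)
    (t : ℕ) (a : Fin (t + 1) → L)
    (ha0 : a 0 = tA ⊓ oB) (hat : a (Fin.last t) = tA)
    (hchain : ∀ i : Fin t, a i.castSucc ⋖ a i.succ) :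
    (∀ i, a i ⋖ a i ⊔ oB) ∧
    (∀ i : Fin t, (a i.castSucc ⊔ oB) ⋖ (a i.succ ⊔ oB)) ∧
    (a (Fin.last t) ⊔ oB = tA ⊔ oB) ∧
    (∀ i, (a i ⊔ oB) ⊓ tA = a i) := by
  -- basic facts
  have hoAtA : oA ≤ tA := by
    have h : oA ∈ Set.Icc oA tA := by
      rw [hA]; exact α.iseqv.refl oA
    exact h.2
  have hrtA : α.r tA oA := by
    have h : tA ∈ Set.Icc oA tA := ⟨hoAtA, le_refl _⟩
    rwa [hA] at h
  have hmonoQ : ∀ x y : L, x ≤ y → α.mkQ x ≤ α.mkQ y := by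
    intro x y h
    have : α.mkQ x ⊔ α.mkQ y = α.mkQ y := by
      rw [LatticeCon'.mkQ_sup, sup_eq_right.mpr h]
    exact sup_eq_right.mp this
  have hmono : ∀ i : Fin (t + 1), a i ≤ tA := by
    refine Fin.reverseInduction ?_ ?_
    · rw [hat]
    · intro i ih
      exact (hchain i).le.trans ih
  have hbnle : ∀ i : Fin (t + 1), ¬ (a i ⊔ oB ≤ tA) := by
    intro i h
    exact hincomp.2 (le_trans le_sup_right h)
  -- claim 4 from claim 1
  have h4gen : ∀ i : Fin (t + 1), a i ⋖ a i ⊔ oB → (a i ⊔ oB) ⊓ tA = a i := by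
    intro i hi
    rcases hi.eq_or_eq (le_inf hi.le (hmono i)) inf_le_left with h | h
    · exact h
    · exact absurd (inf_eq_left.mp h) (hbnle i)
  -- base case
  have base : a 0 ⋖ a 0 ⊔ oB := by
    rw [ha0]
    have hsup : tA ⊓ oB ⊔ oB = oB := sup_eq_right.mpr inf_le_right
    rw [hsup]
    have hlt : tA ⊓ oB < oB := by
      refine lt_of_le_of_ne inf_le_right fun h => hincomp.2 ?_
      rw [← h]; exact inf_le_left
    refine ⟨hlt, fun c h1 h2 => ?_⟩
    have hQ1 : α.mkQ oA ≤ α.mkQ c := by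
      have e1 : α.mkQ tA = α.mkQ oA := Quotient.sound hrtA
      have e2 : α.mkQ oA ⊓ α.mkQ oB = α.mkQ oA := inf_eq_left.mpr hcov.lt.le
      calc α.mkQ oA = α.mkQ tA ⊓ α.mkQ oB := by rw [e1, e2]
        _ = α.mkQ (tA ⊓ oB) := LatticeCon'.mkQ_inf α tA oB
        _ ≤ α.mkQ c := hmonoQ _ _ h1.le
    have hQ2 : α.mkQ c ≤ α.mkQ oB := hmonoQ _ _ h2.le
    rcases hcov.eq_or_eq hQ1 hQ2 with h | h
    · have hr : α.r c oA := Quotient.exact h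
      have hc : c ∈ Set.Icc oA tA := by rw [hA]; exact hr
      exact h1.not_ge (le_inf hc.2 h2.le)
    · have hr : α.r c oB := Quotient.exact h
      have hc : c ∈ Set.Icc oB tB := by rw [hB]; exact hr
      exact h2.not_ge hc.1
  -- inductive step
  have step : ∀ i : Fin t, a i.castSucc ⋖ a i.castSucc ⊔ oB →
      ((a i.castSucc ⊔ oB) ⋖ a i.succ ⊔ oB) ∧ (a i.succ ⋖ a i.succ ⊔ oB) := by
    intro i ih
    set b := a i.castSucc ⊔ oB with hb
    have h4 : b ⊓ tA = a i.castSucc := h4gen _ ih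
    have hm : b ⊓ a i.succ = a i.castSucc := by
      rcases (hchain i).eq_or_eq (le_inf ih.le (hchain i).le) inf_le_right with h | h
      · exact h
      · exfalso
        have hsle : a i.succ ≤ b := by rw [← h]; exact inf_le_left
        have : a i.succ ≤ a i.castSucc := by
          rw [← h4]; exact le_inf hsle (hmono i.succ)
        exact (hchain i).lt.not_ge this
    have hsupeq : b ⊔ a i.succ = a i.succ ⊔ oB := by
      rw [hb, sup_right_comm, sup_eq_right.mpr (hchain i).le]
    constructor
    · have := hsemi (a i.succ) b (by rw [inf_comm, hm]; exact hchain i)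
      rwa [sup_comm, hsupeq] at this
    · have := hsemi b (a i.succ) (by rw [hm]; exact ih)
      rwa [hsupeq] at this
  -- claim 1
  have key : ∀ i : Fin (t + 1), a i ⋖ a i ⊔ oB := by
    refine Fin.induction base ?_
    intro i ih
    exact (step i ih).2
  refine ⟨key, fun i => (step i (key i.castSucc)).1, by rw [hat], fun i => h4gen i (key i)⟩
end

section
/- Let L be a finite lattice, α a congruence of L, and A ≺ B adjacent congruence classes of α in L/α with 1_A and 0_B incomparable. Then 1_A ∧ 0_B ≺ 0_B in L. -/
/-- A lattice congruence. -/
structure LatticeCongr (L : Type*) [Lattice L] where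
  r : L → L → Prop
  iseqv : Equivalence r
  sup_compat : ∀ {a b c d : L}, r a b → r c d → r (a ⊔ c) (b ⊔ d)
  inf_compat : ∀ {a b c d : L}, r a b → r c d → r (a ⊓ c) (b ⊓ d)

namespace LatticeCongr

variable {L : Type*} [Lattice L]

def toSetoid (α : LatticeCongr L) : Setoid L := ⟨α.r, α.iseqv⟩

/-- The quotient lattice `L/α`. -/
def Quot (α : LatticeCongr L) : Type _ := Quotient α.toSetoid

/-- The quotient map. -/
def mkQ (α : LatticeCongr L) (x : L) : α.Quot := Quotient.mk α.toSetoid x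

instance (α : LatticeCongr L) : Max α.Quot :=
  ⟨Quotient.map₂ (· ⊔ ·) fun _ _ h _ _ h' => α.sup_compat h h'⟩

instance (α : LatticeCongr L) : Min α.Quot :=
  ⟨Quotient.map₂ (· ⊓ ·) fun _ _ h _ _ h' => α.inf_compat h h'⟩

@[simp] theorem mkQ_sup (α : LatticeCongr L) (x y : L) :
    α.mkQ x ⊔ α.mkQ y = α.mkQ (x ⊔ y) := rfl

@[simp] theorem mkQ_inf (α : LatticeCongr L) (x y : L) :
    α.mkQ x ⊓ α.mkQ y = α.mkQ (x ⊓ y) := rfl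

instance (α : LatticeCongr L) : Lattice α.Quot :=
  Lattice.mk'
    (fun a b => Quotient.inductionOn₂ a b fun x y => congrArg _ (sup_comm x y))
    (fun a b c => Quotient.inductionOn₃ a b c fun x y z => congrArg _ (sup_assoc x y z))
    (fun a b => Quotient.inductionOn₂ a b fun x y => congrArg _ (inf_comm x y))
    (fun a b c => Quotient.inductionOn₃ a b c fun x y z => congrArg _ (inf_assoc x y z))
    (fun a b => Quotient.inductionOn₂ a b fun x y => congrArg _ (sup_inf_self (a := x) (b := y)))
    (fun a b => Quotient.inductionOn₂ a b fun x y => congrArg _ (inf_sup_self (a := x) (b := y)))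

theorem ext' {α β : LatticeCongr L} (h : ∀ a b, α.r a b ↔ β.r a b) : α = β := by
  have hr : α.r = β.r := funext fun a => funext fun b => propext (h a b)
  cases α; cases β; cases hr; rfl

instance : PartialOrder (LatticeCongr L) where
  le α β := ∀ ⦃a b : L⦄, α.r a b → β.r a b
  le_refl _ _ _ h := h
  le_trans _ _ _ h h' _ _ hab := h' (h hab)
  le_antisymm _ _ h h' := ext' fun a b => ⟨fun hab => h hab, fun hab => h' hab⟩

instance : OrderTop (LatticeCongr L) where
  top := ⟨fun _ _ => True, ⟨fun _ => trivial, fun _ => trivial, fun _ _ => trivial⟩,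
    fun _ _ => trivial, fun _ _ => trivial⟩
  le_top _ _ _ _ := trivial

instance : OrderBot (LatticeCongr L) where
  bot := ⟨Eq, eq_equivalence, fun h h' => by rw [h, h'], fun h h' => by rw [h, h']⟩
  bot_le _ _ _ h := h ▸ (Equivalence.refl (iseqv _) _)

instance : InfSet (LatticeCongr L) where
  sInf S :=
    ⟨fun a b => ∀ θ ∈ S, θ.r a b,
     ⟨fun _ θ _ => θ.iseqv.refl _,
      fun h θ hθ => θ.iseqv.symm (h θ hθ),
      fun h h' θ hθ => θ.iseqv.trans (h θ hθ) (h' θ hθ)⟩,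
     fun h h' θ hθ => θ.sup_compat (h θ hθ) (h' θ hθ),
     fun h h' θ hθ => θ.inf_compat (h θ hθ) (h' θ hθ)⟩

/-- The principal congruence generated by collapsing the pair `(a, b)`. -/
def conPair (a b : L) : LatticeCongr L := sInf {θ : LatticeCongr L | θ.r a b}

end LatticeCongr

/-- For adjacent congruence classes with `1_A` and `0_B` incomparable,
`1_A ⊓ 0_B ⋖ 0_B`. -/
theorem meet_covby_bottom_of_adjacent_classes {L : Type*} [Lattice L] [Fintype L]
    (α : LatticeCongr L) (oA tA oB tB : L)
    (hA : Set.Icc oA tA = {x : L | α.r x oA})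
    (hB : Set.Icc oB tB = {x : L | α.r x oB})
    (hcov : α.mkQ oA ⋖ α.mkQ oB)
    (hincomp : ¬ tA ≤ oB ∧ ¬ oB ≤ tA) :
    tA ⊓ oB ⋖ oB := by
  have hoAtA : oA ≤ tA := by
    have : oA ∈ Set.Icc oA tA := by rw [hA]; exact α.iseqv.refl oA
    exact this.2
  have hrtA : α.r tA oA := by
    have : tA ∈ Set.Icc oA tA := ⟨hoAtA, le_refl _⟩
    rwa [hA] at this
  have hmkA : α.mkQ tA = α.mkQ oA := Quotient.sound hrtA
  set m := tA ⊓ oB with hm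
  have hle : α.mkQ oA ≤ α.mkQ oB := hcov.lt.le
  have hmkm : α.mkQ m = α.mkQ oA := by
    have : α.mkQ tA ⊓ α.mkQ oB = α.mkQ m := α.mkQ_inf tA oB
    rw [hmkA, show α.mkQ oA ⊓ α.mkQ oB = α.mkQ oA from inf_eq_left.mpr hle] at this
    exact this.symm
  have hmlt : m < oB := by
    refine lt_of_le_of_ne inf_le_right ?_
    intro h
    exact hincomp.2 (h ▸ inf_le_left)
  refine ⟨hmlt, ?_⟩
  intro z hmz hzB
  have h1 : α.mkQ oA ≤ α.mkQ z := by
    rw [← hmkm]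
    have : α.mkQ m ⊔ α.mkQ z = α.mkQ z := by
      rw [α.mkQ_sup]; exact congrArg _ (sup_eq_right.mpr hmz.le)
    exact sup_eq_right.mp this
  have h2 : α.mkQ z ≤ α.mkQ oB := by
    have : α.mkQ z ⊔ α.mkQ oB = α.mkQ oB := by
      rw [α.mkQ_sup]; exact congrArg _ (sup_eq_right.mpr hzB.le)
    exact sup_eq_right.mp this
  rcases hcov.eq_or_eq h1 h2 with h | h
  · have hz : α.r z oA := α.iseqv.symm (Quotient.exact h.symm)
    have : z ∈ Set.Icc oA tA := by rw [hA]; exact hz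
    exact absurd (le_inf this.2 hzB.le) hmz.not_ge
  · have hz : α.r z oB := Quotient.exact h
    have : z ∈ Set.Icc oB tB := by rw [hB]; exact hz
    exact absurd this.1 hzB.not_ge
end

section
/- Every finite meet-semidistributive lattice with more than one element has the two-element chain as a homomorphic image. -/
/-- Every finite meet-semidistributive lattice with more than one element has
the two-element chain as a homomorphic image. -/
theorem meet_semidistributive_has_two_chain_image {L : Type*} [Lattice L] [Fintype L]
    [Nontrivial L]
    (hsd : ∀ x y z : L, x ⊓ y = x ⊓ z → x ⊓ y = x ⊓ (y ⊔ z)) :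
    ∃ f : LatticeHom L Bool, Function.Surjective f := by
  classical
  letI : OrderBot L := Fintype.toOrderBot L
  obtain ⟨a, ha⟩ := IsAtomic.exists_atom (α := L)
  have key : ∀ x : L, ¬ a ≤ x → a ⊓ x = ⊥ := by
    intro x hx
    rcases (ha.le_iff).mp inf_le_left with h | h
    · exact h
    · exact absurd (h ▸ inf_le_right) hx
  have prime : ∀ x y : L, a ≤ x ⊔ y → a ≤ x ∨ a ≤ y := by
    intro x y hxy
    by_contra h
    push_neg at h
    have h1 := key x h.1
    have h2 := key y h.2
    have := hsd a x y (h1.trans h2.symm)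
    rw [h1, inf_eq_left.mpr hxy] at this
    exact ha.1 this.symm
  refine ⟨⟨⟨fun x => decide (a ≤ x), ?_⟩, ?_⟩, ?_⟩
  · intro x y
    simp only [Bool.max_eq_or]
    rcases Decidable.em (a ≤ x ⊔ y) with h | h
    · rcases prime x y h with h' | h' <;> simp [h, h']
    · have hx : ¬ a ≤ x := fun h' => h (h'.trans le_sup_left)
      have hy : ¬ a ≤ y := fun h' => h (h'.trans le_sup_right)
      simp [h, hx, hy]
  · intro x y
    simp only [Bool.min_eq_and, le_inf_iff]
    rcases Decidable.em (a ≤ x) with hx | hx <;>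
      rcases Decidable.em (a ≤ y) with hy | hy <;> simp [hx, hy]
  · intro b
    cases b
    · refine ⟨⊥, ?_⟩
      have : ¬ a ≤ ⊥ := fun h => ha.1 (le_bot_iff.mp h)
      simp [LatticeHom.coe_mk, this]
    · exact ⟨a, by simp [LatticeHom.coe_mk]⟩
end

section
/- Let L be a finite meet-semidistributive lattice. Then the meet of all dual atoms of Con L is the smallest congruence δ of L such that L/δ is distributive. -/
section AuxProof

open LatticeCon'

variable {L : Type*} [Lattice L]

/-- Congruence given by a predicate compatible with sup and inf. -/
def predCon {Q : Type*} [Lattice Q] (P : Q → Prop)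
    (hsup : ∀ x y : Q, P (x ⊔ y) ↔ (P x ∧ P y))
    (hinf : ∀ x y : Q, P (x ⊓ y) ↔ (P x ∨ P y)) : LatticeCon' Q where
  r u v := P u ↔ P v
  iseqv := ⟨fun _ => Iff.rfl, Iff.symm, Iff.trans⟩
  sup_compat {a b c d} h1 h2 := (hsup a c).trans ((and_congr h1 h2).trans (hsup b d).symm)
  inf_compat {a b c d} h1 h2 := (hinf a c).trans ((or_congr h1 h2).trans (hinf b d).symm)

theorem predCon_isCoatom {Q : Type*} [Lattice Q] (P : Q → Prop)
    (hsup : ∀ x y : Q, P (x ⊔ y) ↔ (P x ∧ P y))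
    (hinf : ∀ x y : Q, P (x ⊓ y) ↔ (P x ∨ P y))
    {x₀ y₀ : Q} (hx : P x₀) (hy : ¬ P y₀) : IsCoatom (predCon P hsup hinf) := by
  classical
  constructor
  · intro h
    have htr : (⊤ : LatticeCon' Q).r x₀ y₀ := trivial
    rw [← h] at htr
    exact hy (htr.mp hx)
  · intro β hβ
    obtain ⟨u, v, hbuv, hpuv⟩ : ∃ u v, β.r u v ∧ ¬ (predCon P hsup hinf).r u v := by
      by_contra hcon; push_neg at hcon
      exact hβ.not_ge (fun a b h => hcon a b h)
    have hstep : ∀ a b : Q, (P a ↔ P b) → β.r a b := fun a b h => hβ.le h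
    obtain ⟨p, q, hpq, hPp, hPq⟩ : ∃ p q : Q, β.r p q ∧ P p ∧ ¬ P q := by
      by_cases hu : P u
      · have hv : ¬ P v := fun hv => hpuv (iff_of_true hu hv)
        exact ⟨u, v, hbuv, hu, hv⟩
      · have hv : P v := by
          by_contra hv
          exact hpuv (iff_of_false hu hv)
        exact ⟨v, u, β.iseqv.symm hbuv, hv, hu⟩
    have hall : ∀ a b : Q, β.r a b := by
      have cross : ∀ a b : Q, P a → ¬ P b → β.r a b := by
        intro a b ha hb
        exact β.iseqv.trans (hstep a p (iff_of_true ha hPp))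
          (β.iseqv.trans hpq (hstep q b (iff_of_false hPq hb)))
      intro a b
      by_cases ha : P a <;> by_cases hb : P b
      · exact hstep a b (iff_of_true ha hb)
      · exact cross a b ha hb
      · exact β.iseqv.symm (cross b a hb ha)
      · exact hstep a b (iff_of_false ha hb)
    exact eq_top_iff.mpr (fun a b _ => hall a b)

/-- Pullback of a congruence on a quotient. -/
def pullback (θ : LatticeCon' L) (ψ : LatticeCon' θ.Quot) : LatticeCon' L where
  r x y := ψ.r (θ.mkQ x) (θ.mkQ y)
  iseqv := ⟨fun _ => ψ.iseqv.refl _, ψ.iseqv.symm, ψ.iseqv.trans⟩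
  sup_compat h1 h2 := ψ.sup_compat h1 h2
  inf_compat h1 h2 := ψ.inf_compat h1 h2

/-- Each congruence class of a finite lattice has a greatest element. -/
theorem classMax [Fintype L] (α : LatticeCon' L) (a : L) :
    ∃ e, α.r a e ∧ ∀ x, α.r a x → x ≤ e := by
  classical
  set s : Finset L := Finset.univ.filter (fun x => α.r a x) with hs
  have ha : a ∈ s := by simp [hs, α.iseqv.refl a]
  have hne : s.Nonempty := ⟨a, ha⟩
  refine ⟨s.sup' hne id, ?_, ?_⟩
  · exact Finset.sup'_induction (p := fun x => α.r a x) hne id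
      (fun x hx y hy => by simpa using α.sup_compat hx hy)
      (fun b hb => by simpa [hs] using hb)
  · intro x hx
    exact Finset.le_sup' id (by simp [hs, hx])

/-- Meet-semidistributivity passes to quotients (finite case). -/
theorem quot_sd [Fintype L]
    (hsd : ∀ x y z : L, x ⊓ y = x ⊓ z → x ⊓ y = x ⊓ (y ⊔ z)) (α : LatticeCon' L) :
    ∀ x y z : α.Quot, x ⊓ y = x ⊓ z → x ⊓ y = x ⊓ (y ⊔ z) := by
  intro x y z
  refine Quotient.inductionOn₃ x y z ?_
  intro a b c h
  have hbc : α.r (a ⊓ b) (a ⊓ c) := Quotient.exact h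
  obtain ⟨e, he, hemax⟩ := classMax α (a ⊓ b)
  have he' : α.r (a ⊓ c) e := α.iseqv.trans (α.iseqv.symm hbc) he
  have hb0 : b ⊔ a ⊓ b = b := sup_eq_left.mpr inf_le_right
  have hc0 : c ⊔ a ⊓ c = c := sup_eq_left.mpr inf_le_right
  have hra : α.r (a ⊔ e) a := by
    have h' : α.r (a ⊔ e) (a ⊔ (a ⊓ b)) := α.sup_compat (α.iseqv.refl a) (α.iseqv.symm he)
    simpa [sup_inf_self] using h'
  have hrb : α.r (b ⊔ e) b := by
    have h' : α.r (b ⊔ e) (b ⊔ (a ⊓ b)) := α.sup_compat (α.iseqv.refl b) (α.iseqv.symm he)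
    simpa [hb0] using h'
  have hrc : α.r (c ⊔ e) c := by
    have h' : α.r (c ⊔ e) (c ⊔ (a ⊓ c)) := α.sup_compat (α.iseqv.refl c) (α.iseqv.symm he')
    simpa [hc0] using h'
  have h1 : (a ⊔ e) ⊓ (b ⊔ e) = e := by
    refine le_antisymm ?_ (le_inf le_sup_right le_sup_right)
    refine hemax _ ?_
    exact α.iseqv.symm (α.inf_compat hra hrb)
  have h2 : (a ⊔ e) ⊓ (c ⊔ e) = e := by
    refine le_antisymm ?_ (le_inf le_sup_right le_sup_right)
    refine hemax _ ?_
    exact α.iseqv.trans hbc (α.iseqv.symm (α.inf_compat hra hrc))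
  have hkey : (a ⊔ e) ⊓ (b ⊔ e) = (a ⊔ e) ⊓ ((b ⊔ e) ⊔ (c ⊔ e)) :=
    hsd _ _ _ (h1.trans h2.symm)
  show α.mkQ a ⊓ α.mkQ b = α.mkQ a ⊓ (α.mkQ b ⊔ α.mkQ c)
  rw [show α.mkQ a = α.mkQ (a ⊔ e) from (Quotient.sound hra).symm,
      show α.mkQ b = α.mkQ (b ⊔ e) from (Quotient.sound hrb).symm,
      show α.mkQ c = α.mkQ (c ⊔ e) from (Quotient.sound hrc).symm,
      mkQ_inf, mkQ_sup, mkQ_inf]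
  exact congrArg α.mkQ hkey

/-- A finite, nontrivial, simple, meet-semidistributive lattice is distributive. -/
theorem simple_sd_distrib {Q : Type*} [Lattice Q] [Fintype Q]
    (hQsd : ∀ x y z : Q, x ⊓ y = x ⊓ z → x ⊓ y = x ⊓ (y ⊔ z))
    (hnt : ∃ u v : Q, u ≠ v)
    (hsimp : ∀ ψ : LatticeCon' Q, (∃ u v : Q, ¬ ψ.r u v) → ∀ u v : Q, ψ.r u v → u = v) :
    IsDistribQuot Q := by
  classical
  obtain ⟨u₀, v₀, huv⟩ := hnt
  haveI : Nonempty Q := ⟨u₀⟩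
  set bot := Finset.univ.inf' Finset.univ_nonempty (id : Q → Q) with hbotdef
  have hbotle : ∀ x : Q, bot ≤ x := fun x => Finset.inf'_le id (Finset.mem_univ x)
  have hSne : (Finset.univ.filter (fun x : Q => x ≠ bot)).Nonempty := by
    rcases eq_or_ne u₀ bot with h | h
    · refine ⟨v₀, ?_⟩
      simp only [Finset.mem_filter, Finset.mem_univ, true_and]
      exact fun hv => huv (h.trans hv.symm)
    · exact ⟨u₀, by simp [h]⟩
  obtain ⟨j, hjmem, hjmin⟩ : ∃ j ∈ Finset.univ.filter (fun x : Q => x ≠ bot),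
      ∀ x ∈ Finset.univ.filter (fun x : Q => x ≠ bot), ¬ x < j := by
    obtain ⟨j, hj⟩ := Finset.exists_minimal hSne
    exact ⟨j, hj.prop, fun x hx hlt => hj.not_lt hx hlt⟩
  have hj : j ≠ bot := (Finset.mem_filter.mp hjmem).2
  have hmin : ∀ x : Q, x < j → x = bot := by
    intro x hx
    by_contra hxb
    exact hjmin x (Finset.mem_filter.mpr ⟨Finset.mem_univ x, hxb⟩) hx
  have hinfj : ∀ w : Q, ¬ j ≤ w → j ⊓ w = bot := by
    intro w hw
    apply hmin
    exact lt_of_le_of_ne inf_le_left (fun h => hw (by rw [← h]; exact inf_le_right))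
  have hXne : (Finset.univ.filter (fun x : Q => j ⊓ x = bot)).Nonempty :=
    ⟨bot, by simp [le_antisymm inf_le_right (hbotle _)]⟩
  have hjκ : j ⊓ (Finset.univ.filter (fun x : Q => j ⊓ x = bot)).sup' hXne id = bot :=
    Finset.sup'_induction (p := fun x => j ⊓ x = bot) hXne id
      (fun x hx y hy => by
        show j ⊓ (x ⊔ y) = bot
        rw [← hQsd j x y ((id hx : j ⊓ x = bot).trans (id hy : j ⊓ y = bot).symm)]
        exact hx)
      (fun b hb => (Finset.mem_filter.mp hb).2)
  have hmemκ : ∀ w : Q, ¬ j ≤ w →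
      w ≤ (Finset.univ.filter (fun x : Q => j ⊓ x = bot)).sup' hXne id :=
    fun w hw => by
      have hwmem : w ∈ Finset.univ.filter (fun x : Q => j ⊓ x = bot) :=
        Finset.mem_filter.mpr ⟨Finset.mem_univ w, hinfj w hw⟩
      exact Finset.le_sup' id hwmem
  set κ := (Finset.univ.filter (fun x : Q => j ⊓ x = bot)).sup' hXne id with hκdef
  have key : ∀ w : Q, w ≤ κ ↔ ¬ j ≤ w := by
    intro w
    constructor
    · intro hw hjw
      have hle : j ≤ bot := by rw [← hjκ]; exact le_inf le_rfl (hjw.trans hw)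
      exact hj (le_antisymm hle (hbotle j))
    · exact hmemκ w
  have hjnle : ¬ j ≤ κ := (key κ).mp le_rfl
  have hinfP : ∀ x y : Q, x ⊓ y ≤ κ ↔ (x ≤ κ ∨ y ≤ κ) := by
    intro x y
    constructor
    · intro h
      by_contra hc; push_neg at hc
      have h1 : j ≤ x := not_not.mp (fun hx => hc.1 ((key x).mpr hx))
      have h2 : j ≤ y := not_not.mp (fun hy => hc.2 ((key y).mpr hy))
      exact ((key (x ⊓ y)).mp h) (le_inf h1 h2)
    · rintro (h | h)
      exacts [le_trans inf_le_left h, le_trans inf_le_right h]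
  have hsupP : ∀ x y : Q, x ⊔ y ≤ κ ↔ (x ≤ κ ∧ y ≤ κ) := fun x y => sup_le_iff
  have hψnt : ∃ u v : Q, ¬ (predCon (fun x : Q => x ≤ κ) hsupP hinfP).r u v :=
    ⟨κ, j, fun h => hjnle (h.mp le_rfl)⟩
  have hcls := hsimp _ hψnt
  have hall : ∀ u : Q, u = κ ∨ u = j := by
    intro u
    by_cases hu : u ≤ κ
    · exact Or.inl (hcls u κ (iff_of_true hu le_rfl))
    · exact Or.inr (hcls u j (iff_of_false hu hjnle))
  have hκj : κ ≤ j := by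
    rcases hall bot with h | h
    · rw [← h]; exact hbotle j
    · exact absurd h.symm hj
  intro x y z
  rcases hall x with rfl | rfl <;> rcases hall y with rfl | rfl <;> rcases hall z with rfl | rfl <;>
    simp [inf_eq_left.mpr hκj, inf_eq_right.mpr hκj, sup_eq_left.mpr hκj, sup_eq_right.mpr hκj]

/-- Every quotient of a finite meet-semidistributive lattice by a coatom of `Con L`
is distributive. -/
theorem coatom_distrib [Fintype L]
    (hsd : ∀ x y z : L, x ⊓ y = x ⊓ z → x ⊓ y = x ⊓ (y ⊔ z))
    (α : LatticeCon' L) (hα : IsCoatom α) : IsDistribQuot α.Quot := by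
  classical
  haveI : Fintype α.Quot :=
    Fintype.ofSurjective α.mkQ (fun q => Quotient.inductionOn q (fun a => ⟨a, rfl⟩))
  have hnt : ∃ u v : α.Quot, u ≠ v := by
    by_contra h; push_neg at h
    exact hα.1 (LatticeCon'.ext' (fun a b =>
      ⟨fun _ => trivial, fun _ => Quotient.exact (h (α.mkQ a) (α.mkQ b))⟩))
  have hsimp : ∀ ψ : LatticeCon' α.Quot, (∃ u v, ¬ ψ.r u v) → ∀ u v, ψ.r u v → u = v := by
    intro ψ hnt' u v
    have hle : α ≤ pullback α ψ := by
      intro a b h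
      show ψ.r (α.mkQ a) (α.mkQ b)
      rw [show α.mkQ a = α.mkQ b from Quotient.sound h]
      exact ψ.iseqv.refl _
    rcases eq_or_lt_of_le hle with heq | hlt
    · refine Quotient.inductionOn₂ u v ?_
      intro a b huv
      have h' : (pullback α ψ).r a b := huv
      rw [← heq] at h'
      exact Quotient.sound h'
    · exfalso
      have htop : pullback α ψ = ⊤ := hα.2 _ hlt
      obtain ⟨p, q, hpq⟩ := hnt'
      revert hpq
      refine Quotient.inductionOn₂ p q ?_
      intro a b hpq
      have h' : (pullback α ψ).r a b := by rw [htop]; trivial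
      exact hpq h'
  exact simple_sd_distrib (quot_sd hsd α) hnt hsimp

/-- Separation by a meet-prime principal ideal in a finite distributive lattice. -/
theorem exists_prime_sep {D : Type*} [Lattice D] [Fintype D]
    (hD : IsDistribQuot D) {u v : D} (huv : ¬ u ≤ v) :
    ∃ κ : D, v ≤ κ ∧ ¬ u ≤ κ ∧ ∀ x y : D, x ⊓ y ≤ κ ↔ (x ≤ κ ∨ y ≤ κ) := by
  classical
  have hSne : (Finset.univ.filter (fun x : D => x ≤ u ∧ ¬ x ≤ v)).Nonempty :=
    ⟨u, by simp [huv]⟩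
  obtain ⟨j, hjmem, hjmin⟩ : ∃ j ∈ Finset.univ.filter (fun x : D => x ≤ u ∧ ¬ x ≤ v),
      ∀ x ∈ Finset.univ.filter (fun x : D => x ≤ u ∧ ¬ x ≤ v), ¬ x < j := by
    obtain ⟨j, hj⟩ := Finset.exists_minimal hSne
    exact ⟨j, hj.prop, fun x hx hlt => hj.not_lt hx hlt⟩
  obtain ⟨hju, hjv⟩ : j ≤ u ∧ ¬ j ≤ v := (Finset.mem_filter.mp hjmem).2
  have hmin : ∀ x : D, x < j → x ≤ v := by
    intro x hx
    by_contra hxv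
    exact hjmin x (Finset.mem_filter.mpr ⟨Finset.mem_univ x, hx.le.trans hju, hxv⟩) hx
  have hinfj : ∀ w : D, ¬ j ≤ w → j ⊓ w ≤ v := by
    intro w hw
    apply hmin
    exact lt_of_le_of_ne inf_le_left (fun h => hw (by rw [← h]; exact inf_le_right))
  have hXne : (Finset.univ.filter (fun x : D => j ⊓ x ≤ v)).Nonempty :=
    ⟨v, by simp⟩
  have hjκ : j ⊓ (Finset.univ.filter (fun x : D => j ⊓ x ≤ v)).sup' hXne id ≤ v :=
    Finset.sup'_induction (p := fun x => j ⊓ x ≤ v) hXne id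
      (fun x hx y hy => by
        show j ⊓ (x ⊔ y) ≤ v
        rw [hD j x y]
        exact sup_le hx hy)
      (fun b hb => (Finset.mem_filter.mp hb).2)
  have hmemκ : ∀ w : D, ¬ j ≤ w →
      w ≤ (Finset.univ.filter (fun x : D => j ⊓ x ≤ v)).sup' hXne id :=
    fun w hw => by
      have hwmem : w ∈ Finset.univ.filter (fun x : D => j ⊓ x ≤ v) :=
        Finset.mem_filter.mpr ⟨Finset.mem_univ w, hinfj w hw⟩
      exact Finset.le_sup' id hwmem
  set κ := (Finset.univ.filter (fun x : D => j ⊓ x ≤ v)).sup' hXne id with hκdef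
  have key : ∀ w : D, w ≤ κ ↔ ¬ j ≤ w := by
    intro w
    constructor
    · intro hw hjw
      exact hjv (le_trans (le_inf le_rfl (hjw.trans hw)) hjκ)
    · exact hmemκ w
  refine ⟨κ, (key v).mpr hjv, fun h => ((key u).mp h) hju, ?_⟩
  intro x y
  constructor
  · intro h
    by_contra hc; push_neg at hc
    have h1 : j ≤ x := not_not.mp (fun hx => hc.1 ((key x).mpr hx))
    have h2 : j ≤ y := not_not.mp (fun hy => hc.2 ((key y).mpr hy))
    exact ((key (x ⊓ y)).mp h) (le_inf h1 h2)
  · rintro (h | h)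
    exacts [le_trans inf_le_left h, le_trans inf_le_right h]

/-- Auxiliary contradiction for the minimality part. -/
theorem part2_aux [Fintype L] (θ : LatticeCon' L)
    [Fintype θ.Quot] (hD : IsDistribQuot θ.Quot) {a b : L}
    (h : ¬ θ.mkQ a ≤ θ.mkQ b)
    (hab : ∀ ψ : LatticeCon' L, IsCoatom ψ → ψ.r a b) : False := by
  obtain ⟨κ, hvκ, huκ, hprime⟩ := exists_prime_sep hD h
  have hsup : ∀ x y : L, θ.mkQ (x ⊔ y) ≤ κ ↔ (θ.mkQ x ≤ κ ∧ θ.mkQ y ≤ κ) := by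
    intro x y
    rw [← mkQ_sup]
    exact sup_le_iff
  have hinf : ∀ x y : L, θ.mkQ (x ⊓ y) ≤ κ ↔ (θ.mkQ x ≤ κ ∨ θ.mkQ y ≤ κ) := by
    intro x y
    rw [← mkQ_inf]
    exact hprime _ _
  have hco : IsCoatom (predCon (fun x : L => θ.mkQ x ≤ κ) hsup hinf) :=
    predCon_isCoatom _ hsup hinf hvκ huκ
  have hr : (predCon (fun x : L => θ.mkQ x ≤ κ) hsup hinf).r a b := hab _ hco
  exact huκ (hr.mpr hvκ)

end AuxProof

/-- In a finite meet-semidistributive lattice, the meet of all dual atoms of `Con L`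
is the least congruence with distributive quotient. -/
theorem inf_coatoms_is_least_distributive {L : Type*} [Lattice L] [Fintype L]
    (hsd : ∀ x y z : L, x ⊓ y = x ⊓ z → x ⊓ y = x ⊓ (y ⊔ z)) :
    IsDistribQuot (sInf {θ : LatticeCon' L | IsCoatom θ}).Quot ∧
    ∀ θ : LatticeCon' L, IsDistribQuot θ.Quot →
      sInf {θ' : LatticeCon' L | IsCoatom θ'} ≤ θ := by
  classical
  constructor
  · intro x y z
    refine Quotient.inductionOn₃ x y z ?_
    intro a b c
    have hrel : (sInf {θ : LatticeCon' L | IsCoatom θ}).r (a ⊓ (b ⊔ c)) (a ⊓ b ⊔ a ⊓ c) := by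
      show ∀ θ ∈ {θ : LatticeCon' L | IsCoatom θ}, θ.r (a ⊓ (b ⊔ c)) (a ⊓ b ⊔ a ⊓ c)
      intro θ hθ
      have hdist := coatom_distrib hsd θ hθ (θ.mkQ a) (θ.mkQ b) (θ.mkQ c)
      change θ.mkQ (a ⊓ (b ⊔ c)) = θ.mkQ (a ⊓ b ⊔ a ⊓ c) at hdist
      exact Quotient.exact hdist
    show (sInf {θ : LatticeCon' L | IsCoatom θ}).mkQ a ⊓
        ((sInf {θ : LatticeCon' L | IsCoatom θ}).mkQ b ⊔
          (sInf {θ : LatticeCon' L | IsCoatom θ}).mkQ c) =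
        (sInf {θ : LatticeCon' L | IsCoatom θ}).mkQ a ⊓
          (sInf {θ : LatticeCon' L | IsCoatom θ}).mkQ b ⊔
        (sInf {θ : LatticeCon' L | IsCoatom θ}).mkQ a ⊓
          (sInf {θ : LatticeCon' L | IsCoatom θ}).mkQ c
    simp only [LatticeCon'.mkQ_inf, LatticeCon'.mkQ_sup]
    exact Quotient.sound hrel
  · intro θ hθdist a b hab
    haveI : Fintype θ.Quot :=
      Fintype.ofSurjective θ.mkQ (fun q => Quotient.inductionOn q (fun a => ⟨a, rfl⟩))
    have hab' : ∀ ψ : LatticeCon' L, IsCoatom ψ → ψ.r a b := fun ψ hψ => hab ψ hψ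
    by_contra hth
    have hne : θ.mkQ a ≠ θ.mkQ b := fun h => hth (Quotient.exact h)
    rcases Classical.em (θ.mkQ a ≤ θ.mkQ b) with hle | hle
    · have h2 : ¬ θ.mkQ b ≤ θ.mkQ a := fun h' => hne (le_antisymm hle h')
      exact part2_aux θ hθdist h2 (fun ψ hψ => ψ.iseqv.symm (hab' ψ hψ))
    · exact part2_aux θ hθdist hle hab'
end

section
/- Let L be a finite semimodular lattice, α a congruence, and A ≺ B congruence classes in L/α with 1_A and 0_B incomparable, a_0 = 1_A ∧ 0_B, and a_0 ≺ a_1 ≺ ... ≺ a_t = 1_A a maximal chain in [a_0, 1_A]. Then with b_i = a_i ∨ 0_B, the interval [a_0, b_t] has length t + 1, i.e., the chains a_0 ≺ a_1 ≺ ... ≺ a_t ≺ b_t and a_0 ≺ b_0 ≤ b_1 ≤ ... ≤ b_t both have length t + 1. -/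
section JHAux

variable {L : Type*} [Lattice L]

private lemma chain_head_le (c : ℕ → L) :
    ∀ n, (∀ k < n, c k ⋖ c (k+1)) → c 0 ≤ c n := by
  intro n
  induction n with
  | zero => exact fun _ => le_refl _
  | succ n ih =>
    intro h
    exact (ih (fun k hk => h k (by omega))).trans (h n (by omega)).le

private lemma jh_exchange (hsemi : IsSemimodular L) :
    ∀ (n : ℕ) (c : ℕ → L), (∀ k < n, c k ⋖ c (k+1)) → ∀ z : L, c 0 ⋖ z → z ≤ c n →
    ∃ (m : ℕ) (d : ℕ → L), m + 1 = n ∧ (∀ k < m, d k ⋖ d (k+1)) ∧ d 0 = z ∧ d m = c n := by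
  intro n
  induction n with
  | zero =>
    intro c _ z hz hle
    exact absurd hle hz.lt.not_ge
  | succ n ih =>
    intro c hc z hz hle
    have h01 : c 0 ⋖ c 1 := hc 0 (by omega)
    by_cases hz1 : z = c 1
    · refine ⟨n, fun k => c (k+1), rfl, fun k hk => hc (k+1) (by omega), hz1.symm, rfl⟩
    · have hmeet : z ⊓ c 1 = c 0 := by
        rcases hz.eq_or_eq (le_inf hz.le h01.le) inf_le_left with h | h
        · exact h
        · have hzle : z ≤ c 1 := h ▸ inf_le_right
          exact absurd (lt_of_le_of_ne hzle hz1) (h01.2 hz.lt)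
      have hc1w : c 1 ⋖ z ⊔ c 1 := hsemi z (c 1) (by rw [hmeet]; exact hz)
      have hzw : z ⋖ z ⊔ c 1 := by
        have := hsemi (c 1) z (by rw [inf_comm, hmeet]; exact h01)
        rwa [sup_comm] at this
      have hc1last : c 1 ≤ c (n+1) :=
        chain_head_le (fun k => c (k+1)) n (fun k hk => hc (k+1) (by omega))
      obtain ⟨m, d, hm, hd, hd0, hdm⟩ :=
        ih (fun k => c (k+1)) (fun k hk => hc (k+1) (by omega)) (z ⊔ c 1) hc1w
          (sup_le hle hc1last)
      refine ⟨m + 1, fun k => if k = 0 then z else d (k-1), by omega, ?_, by simp, ?_⟩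
      · intro k hk
        match k with
        | 0 => simpa [hd0] using hzw
        | (j+1) =>
          have : j < m := by omega
          simpa using hd j this
      · simpa using hdm
  
private lemma jh_unique (hsemi : IsSemimodular L) :
    ∀ (n m : ℕ) (c d : ℕ → L), (∀ k < n, c k ⋖ c (k+1)) → (∀ k < m, d k ⋖ d (k+1)) →
    c 0 = d 0 → c n = d m → n = m := by
  intro n
  induction n with
  | zero =>
    intro m c d _ hd h0 hn
    match m with
    | 0 => rfl
    | (m+1) =>
      exfalso
      have h1 : d 0 ≤ d m := chain_head_le d m (fun k hk => hd k (by omega))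
      have h2 : d m < d (m+1) := (hd m (by omega)).lt
      rw [← hn, h0] at h2
      exact absurd (h1.trans_lt h2) (lt_irrefl _)
  | succ n ih =>
    intro m c d hc hd h0 hn
    have hc1 : c 1 ≤ c (n+1) :=
      chain_head_le (fun k => c (k+1)) n (fun k hk => hc (k+1) (by omega))
    obtain ⟨m', d', hm', hd', hd0', hdm'⟩ :=
      jh_exchange hsemi m d hd (c 1) (h0 ▸ hc 0 (by omega)) (hn ▸ hc1)
    have : n = m' :=
      ih m' (fun k => c (k+1)) d' (fun k hk => hc (k+1) (by omega)) hd' hd0'.symm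
        (by show c (n+1) = d' m'; rw [hdm']; exact hn)
    omega

private lemma weak_to_cover :
    ∀ (n : ℕ) (c : ℕ → L), (∀ k < n, c k ⋖ c (k+1) ∨ c k = c (k+1)) →
    ∃ (m : ℕ) (d : ℕ → L), m ≤ n ∧ (∀ k < m, d k ⋖ d (k+1)) ∧ d 0 = c 0 ∧ d m = c n ∧
      ((∃ k, k < n ∧ c k = c (k+1)) → m < n) := by
  intro n
  induction n with
  | zero =>
    intro c _
    exact ⟨0, c, le_refl _, fun k hk => absurd hk (by omega), rfl, rfl,
      fun ⟨k, hk, _⟩ => absurd hk (by omega)⟩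
  | succ n ih =>
    intro c h
    obtain ⟨m, d, hm, hd, h0, hn', hstrict⟩ := ih c (fun k hk => h k (by omega))
    rcases h n (by omega) with hcov | heq
    · refine ⟨m + 1, fun k => if k ≤ m then d k else c (n+1), by omega, ?_, ?_, ?_, ?_⟩
      · intro k hk
        rcases Nat.lt_or_ge k m with hkm | hkm
        · have e1 : k ≤ m := by omega
          have e2 : k + 1 ≤ m := by omega
          simpa [e1, e2] using hd k hkm
        · have hke : k = m := by omega
          subst hke
          have e2 : ¬ (k + 1 ≤ k) := by omega
          simpa [e2, hn'] using hcov
      · simp [h0]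
      · have : ¬ (m + 1 ≤ m) := by omega
        simp [this]
      · rintro ⟨k, hk, hkeq⟩
        rcases Nat.lt_or_ge k n with hkn | hkn
        · exact Nat.succ_lt_succ (hstrict ⟨k, hkn, hkeq⟩)
        · have : k = n := by omega
          subst this
          exact absurd hkeq hcov.ne
    · exact ⟨m, d, by omega, hd, h0, by rw [hn', heq], fun _ => by omega⟩

private lemma cov_sup_dichotomy (hsemi : IsSemimodular L) {x y : L} (c : L) (h : x ⋖ y) :
    (x ⊔ c ⋖ y ⊔ c) ∨ x ⊔ c = y ⊔ c := by
  rcases h.eq_or_eq (le_inf le_sup_left h.le) (inf_le_right : (x ⊔ c) ⊓ y ≤ y) with hm | hm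
  · left
    have := hsemi y (x ⊔ c) (by rw [inf_comm, hm]; exact h)
    rwa [← sup_assoc, sup_eq_left.mpr h.le] at this
  · right
    have hyx : y ≤ x ⊔ c := inf_eq_right.mp hm
    exact le_antisymm (sup_le_sup_right h.le c) (sup_le hyx le_sup_right)

end JHAux

/-- Jordan–Hölder for the ladder: the interval `[a₀, b_t]` has length `t + 1`;
both chains `a₀ ≺ ⋯ ≺ a_t ≺ b_t` and `a₀ ≺ b₀ ≤ ⋯ ≤ b_t` are maximal chains
of length `t + 1` (so all the steps `b_i ≤ b_{i+1}` are covers). -/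
theorem ladder_interval_length {L : Type*} [Lattice L] [Fintype L]
    (hsemi : IsSemimodular L)
    (α : LatticeCon' L) (oA tA oB tB : L)
    (hA : Set.Icc oA tA = {x : L | α.r x oA})
    (hB : Set.Icc oB tB = {x : L | α.r x oB})
    (hcov : α.mkQ oA ⋖ α.mkQ oB)
    (hincomp : ¬ tA ≤ oB ∧ ¬ oB ≤ tA)
    (t : ℕ) (a : Fin (t + 1) → L)
    (ha0 : a 0 = tA ⊓ oB) (hat : a (Fin.last t) = tA)
    (hchain : ∀ i : Fin t, a i.castSucc ⋖ a i.succ) :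
    (a (Fin.last t) ⋖ a (Fin.last t) ⊔ oB) ∧
    (a 0 ⋖ a 0 ⊔ oB) ∧
    (∀ i : Fin t, a i.castSucc ⊔ oB ≤ a i.succ ⊔ oB) ∧
    (∀ i : Fin t, (a i.castSucc ⊔ oB) ⋖ (a i.succ ⊔ oB)) := by
  obtain ⟨h1, h2⟩ := hincomp
  have memA : ∀ x : L, x ∈ Set.Icc oA tA ↔ α.r x oA := fun x => by rw [hA]; exact Iff.rfl
  have memB : ∀ x : L, x ∈ Set.Icc oB tB ↔ α.r x oB := fun x => by rw [hB]; exact Iff.rfl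
  have hoAtA : oA ≤ tA := ((memA oA).mpr (α.iseqv.refl oA)).2
  have hrtA : α.r tA oA := (memA tA).mp ⟨hoAtA, le_refl _⟩
  have hoAoB : oA ≤ oB := by
    have h3 : α.mkQ oA ⊓ α.mkQ oB = α.mkQ oA := inf_eq_left.mpr hcov.le
    rw [LatticeCon'.mkQ_inf] at h3
    have h4 : α.r (oA ⊓ oB) oA := Quotient.exact h3
    have h5 : oA ≤ oA ⊓ oB := ((memA _).mpr h4).1
    exact h5.trans inf_le_right
  -- key cover: tA ⊓ oB ⋖ oB
  have hkey : tA ⊓ oB ⋖ oB := by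
    constructor
    · refine lt_of_le_of_ne inf_le_right (fun h => h2 ?_)
      rw [← h]; exact inf_le_left
    · intro x hx hxB
      have hoAx : oA ≤ x := (le_inf hoAtA hoAoB).trans hx.le
      have hq1 : α.mkQ oA ≤ α.mkQ x := by
        rw [← inf_eq_left]; exact (LatticeCon'.mkQ_inf α oA x).trans (by rw [inf_eq_left.mpr hoAx])
      have hq2 : α.mkQ x ≤ α.mkQ oB := by
        rw [← inf_eq_left]; exact (LatticeCon'.mkQ_inf α x oB).trans (by rw [inf_eq_left.mpr hxB.le])
      rcases hcov.eq_or_eq hq1 hq2 with h | h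
      · have hxA : α.r x oA := Quotient.exact h
        have hxtA : x ≤ tA := ((memA x).mpr hxA).2
        exact hx.not_ge (le_inf hxtA hxB.le)
      · have hxB' : α.r x oB := Quotient.exact h
        exact hxB.not_ge ((memB x).mpr hxB').1
  have goal1 : tA ⋖ tA ⊔ oB := by
    have := hsemi oB tA (by rw [inf_comm]; exact hkey)
    rwa [sup_comm] at this
  have goal1' : a (Fin.last t) ⋖ a (Fin.last t) ⊔ oB := by rw [hat]; exact goal1
  have goal2 : a 0 ⋖ a 0 ⊔ oB := by
    rw [ha0, sup_eq_right.mpr inf_le_right]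
    exact hkey
  have goal3 : ∀ i : Fin t, a i.castSucc ⊔ oB ≤ a i.succ ⊔ oB :=
    fun i => sup_le_sup_right (hchain i).le oB
  refine ⟨goal1', goal2, goal3, ?_⟩
  -- ℕ-indexed version of the chain
  set a' : ℕ → L := fun k => a ⟨min k t, by omega⟩ with ha'def
  have ha'eq : ∀ (k : ℕ) (hk : k ≤ t), a' k = a ⟨k, by omega⟩ := by
    intro k hk
    simp only [ha'def]
    congr 1
    exact Fin.ext (by simp [Nat.min_eq_left hk])
  have ha'0 : a' 0 = a 0 := by
    rw [ha'eq 0 (by omega)]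
    congr 1
  have ha't : a' t = tA := by
    rw [ha'eq t (le_refl t), ← hat]
    congr 1
  have hstep : ∀ k, k < t → a' k ⋖ a' (k+1) := by
    intro k hk
    have e1 : a' k = a (Fin.castSucc ⟨k, hk⟩) := by
      rw [ha'eq k (by omega)]
      congr 1
    have e2 : a' (k+1) = a (Fin.succ ⟨k, hk⟩) := by
      rw [ha'eq (k+1) (by omega)]
      congr 1
    rw [e1, e2]
    exact hchain ⟨k, hk⟩
  -- maximal chain a' 0 ⋖ ... ⋖ a' t ⋖ tA ⊔ oB of length t+1
  set cA : ℕ → L := fun k => if k ≤ t then a' k else tA ⊔ oB with hcAdef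
  have hcA : ∀ k < t + 1, cA k ⋖ cA (k+1) := by
    intro k hk
    rcases Nat.lt_or_ge k t with hkt | hkt
    · have e1 : k ≤ t := by omega
      have e2 : k + 1 ≤ t := by omega
      simpa [hcAdef, e1, e2] using hstep k hkt
    · have hke : k = t := by omega
      subst hke
      have e2 : ¬ (k + 1 ≤ k) := by omega
      simpa [hcAdef, e2, ha't] using goal1
  -- weak chain a' 0 ⋖ b 0 ≤ b 1 ≤ ... ≤ b t of length t+1
  set cB : ℕ → L := fun k => if k = 0 then a' 0 else a' (k-1) ⊔ oB with hcBdef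
  have hweak : ∀ k < t + 1, cB k ⋖ cB (k+1) ∨ cB k = cB (k+1) := by
    intro k hk
    match k with
    | 0 =>
      left
      have : a' 0 ⋖ a' 0 ⊔ oB := by rw [ha'0]; exact goal2
      simpa [hcBdef] using this
    | (j+1) =>
      have hj : j < t := by omega
      have h' := cov_sup_dichotomy hsemi oB (hstep j hj)
      have e1 : cB (j+1) = a' j ⊔ oB := by simp [hcBdef]
      have e2 : cB (j+1+1) = a' (j+1) ⊔ oB := by simp [hcBdef]
      rw [e1, e2]
      exact h'
  -- final goal
  intro i
  rcases cov_sup_dichotomy hsemi oB (hchain i) with hc | he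
  · exact hc
  · exfalso
    obtain ⟨m, d, hm, hd, hd0, hdm, hstrict⟩ := weak_to_cover (t+1) cB hweak
    have hieq : cB (i.val + 1) = cB (i.val + 2) := by
      have ea1 : a' i.val = a i.castSucc := by
        rw [ha'eq i.val (by omega)]
        congr 1
      have ea2 : a' (i.val + 1) = a i.succ := by
        rw [ha'eq (i.val+1) (by omega)]
        congr 1
      have e1 : cB (i.val+1) = a' i.val ⊔ oB := by simp [hcBdef]
      have e2 : cB (i.val+2) = a' (i.val+1) ⊔ oB := by simp [hcBdef]
      rw [e1, e2, ea1, ea2]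
      exact he
    have hmlt : m < t + 1 := hstrict ⟨i.val + 1, by omega, hieq⟩
    have hjh : t + 1 = m := by
      refine jh_unique hsemi (t+1) m cA d hcA hd ?_ ?_
      · rw [hd0]
        simp [hcAdef, hcBdef]
      · rw [hdm]
        have e1 : ¬ (t + 1 ≤ t) := by omega
        have e2 : ¬ (t + 1 = 0) := by omega
        simp [hcAdef, hcBdef, e1, e2, ha't]
    omega
end
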